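/- Let T : V → g be an O-operator on a Lie algebra g with respect to a representation (V;ρ). Then the product u ·_T v := ρ(Tu)v defines a pre-Lie algebra structure on V, i.e. (u·_T v)·_T w − u·_T(v·_T w) is symmetric in u and v. -/

import Mathlib

attribute [local instance] LieRing.ofAssociativeRing

/-- An O-operator induces a pre-Lie product `u ·_T v := ρ(Tu)v` on `V`:
the associator is symmetric in the first two arguments. -/
theorem stmt1 {K : Type*} [Field K]
    {g : Type*} [LieRing g] [LieAlgebra K g]
    {V : Type*} [AddCommGroup V] [Module K V]
    (ρ : g →ₗ⁅K⁆ Module.End K V) (T : V →ₗ[K] g)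
    (hT : ∀ u v : V, ⁅T u, T v⁆ = T (ρ (T u) v - ρ (T v) u)) :
    ∀ u v w : V,
      ρ (T (ρ (T u) v)) w - ρ (T u) (ρ (T v) w)
        = ρ (T (ρ (T v) u)) w - ρ (T v) (ρ (T u) w) := by
  intro u v w
  have h := congrArg (fun x => ρ x w) (hT u v)
  simp only [LieHom.map_lie, map_sub, LinearMap.sub_apply,
    LieRing.of_associative_ring_bracket, Module.End.mul_apply] at h
  rw [sub_eq_sub_iff_sub_eq_sub]
  exact h.symm
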